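/- Let 0 < R < π, let c = 4 cot²(R/2) log cos(R/2), and define u : (0, R] → ℝ by u(r) = 2(log cos(r/2))² − 2(log cos(R/2))² + Li₂(−tan²(r/2)) − Li₂(−tan²(R/2)) + c·log( cos(r/2)/cos(R/2) ). Then 2π ∫₀^R u(r) sin r dr = 4π ( sin²(R/2) − 4 cot²(R/2) (log cos(R/2))² ). -/

import Mathlib

open MeasureTheory Real

/-- The dilogarithm, defined for real `x ≤ 1` by `Li₂(x) = −∫₀ˣ log(1−t)/t dt`. -/
noncomputable def Li2 (x : ℝ) : ℝ := - ∫ t in (0:ℝ)..x, Real.log (1 - t) / t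

lemma g_meas : Measurable (fun t : ℝ => Real.log (1 - t) / t) :=
  (Real.measurable_log.comp (measurable_const.sub measurable_id)).div measurable_id

lemma g_bound {t : ℝ} (ht : t ≤ 0) : |Real.log (1 - t) / t| ≤ 1 := by
  rcases eq_or_lt_of_le ht with h | h
  · simp [h]
  · have h1 : (0:ℝ) < 1 - t := by linarith
    have hlog0 : 0 ≤ Real.log (1 - t) := Real.log_nonneg (by linarith)
    have hlog1 : Real.log (1 - t) ≤ -t := by
      have := Real.log_le_sub_one_of_pos h1; linarith
    rw [abs_div, abs_of_nonneg hlog0, abs_of_neg h]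
    exact div_le_one_of_le₀ hlog1 (by linarith)

lemma g_intble {x : ℝ} (hx : x ≤ 0) :
    IntervalIntegrable (fun t : ℝ => Real.log (1 - t) / t) volume 0 x := by
  apply (intervalIntegrable_const (c := (1:ℝ))).mono_fun
    (g_meas.aestronglyMeasurable.restrict)
  filter_upwards [ae_restrict_mem measurableSet_uIoc] with t ht
  have ht0 : t ≤ 0 := by
    rw [Set.uIoc_comm, Set.uIoc_of_le hx] at ht
    exact ht.2
  simpa [Real.norm_eq_abs, ← abs_div] using g_bound ht0

lemma li2_zero : Li2 0 = 0 := by simp [Li2]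

lemma li2_abs_le {x : ℝ} (hx : x ≤ 0) : |Li2 x| ≤ |x| := by
  have h := intervalIntegral.norm_integral_le_of_norm_le_const (C := 1)
    (f := fun t : ℝ => Real.log (1 - t) / t) (a := 0) (b := x) ?_
  · simpa [Li2, Real.norm_eq_abs] using h
  · intro t ht
    have ht0 : t ≤ 0 := by rw [Set.uIoc_comm, Set.uIoc_of_le hx] at ht; exact ht.2
    simpa [Real.norm_eq_abs, ← abs_div] using g_bound ht0

lemma li2_hasDerivAt {x : ℝ} (hx : x < 0) :
    HasDerivAt Li2 (-(Real.log (1 - x) / x)) x := by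
  have hcont : ContinuousAt (fun t : ℝ => Real.log (1 - t) / t) x := by
    apply ContinuousAt.div _ continuousAt_id hx.ne
    exact (Real.continuousAt_log (by linarith)).comp
      ((continuous_const.sub continuous_id).continuousAt)
  have h := (intervalIntegral.integral_hasDerivAt_right (g_intble hx.le)
    (g_meas.stronglyMeasurable.stronglyMeasurableAtFilter) hcont).neg
  exact h

lemma li2_continuousOn : ContinuousOn Li2 (Set.Iic 0) := by
  intro x hx
  rcases lt_or_eq_of_le (Set.mem_Iic.mp hx) with h | h
  · exact ((li2_hasDerivAt h).continuousAt).continuousWithinAt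
  · subst h
    unfold ContinuousWithinAt
    rw [li2_zero]
    have hg : Filter.Tendsto (fun y : ℝ => |y|) (nhdsWithin 0 (Set.Iic 0)) (nhds 0) := by
      simpa using (continuous_abs.tendsto (0:ℝ)).mono_left nhdsWithin_le_nhds
    apply squeeze_zero_norm' ?_ hg
    filter_upwards [self_mem_nhdsWithin] with y hy
    simpa [Real.norm_eq_abs] using li2_abs_le (Set.mem_Iic.mp hy)

noncomputable def Faux (c K : ℝ) (s : ℝ) : ℝ :=
  2 * (-(Real.log (Real.cos (s/2)))^2 * Real.cos s + Real.log (Real.cos (s/2)) * Real.cos s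
      - 1/2 * Real.cos s + Real.log (Real.cos (s/2)) - (Real.log (Real.cos (s/2)))^2)
  + (Li2 (-(Real.tan (s/2))^2) * (1 - Real.cos s) + 4 * (Real.log (Real.cos (s/2)))^2)
  + K * Real.cos s
  + c * (-(Real.log (Real.cos (s/2))) * Real.cos s + 1/2 * Real.cos s - Real.log (Real.cos (s/2)))

set_option maxHeartbeats 1000000 in
lemma Faux_hasDerivAt (c K : ℝ) {r : ℝ} (hr0 : 0 < r) (hrπ : r < π) :
    HasDerivAt (Faux c K)
      ((2 * (Real.log (Real.cos (r/2)))^2 + Li2 (-(Real.tan (r/2))^2)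
        + c * Real.log (Real.cos (r/2)) - K) * Real.sin r) r := by
  have hr2 : 0 < r/2 := by linarith
  have hr2' : r/2 < π/2 := by linarith
  have hC : 0 < Real.cos (r/2) := Real.cos_pos_of_mem_Ioo ⟨by linarith, hr2'⟩
  have hS : 0 < Real.sin (r/2) := Real.sin_pos_of_pos_of_lt_pi hr2 (by linarith [Real.pi_pos])
  have hT : 0 < Real.tan (r/2) := Real.tan_pos_of_pos_of_lt_pi_div_two hr2 hr2'
  have hsinr : 0 < Real.sin r := Real.sin_pos_of_pos_of_lt_pi hr0 hrπ
  have hsin2 : Real.sin r = 2 * Real.sin (r/2) * Real.cos (r/2) := by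
    have := Real.sin_two_mul (r/2); rwa [show 2*(r/2) = r by ring] at this
  have hcos2 : Real.cos r = 2 * Real.cos (r/2)^2 - 1 := by
    have := Real.cos_two_mul (r/2); rwa [show 2*(r/2) = r by ring] at this
  have hS2 : Real.sin (r/2)^2 = 1 - Real.cos (r/2)^2 := Real.sin_sq (r/2)
  have hhalf : HasDerivAt (fun s : ℝ => s/2) (1/2) r := (hasDerivAt_id r).div_const 2
  have hcosh : HasDerivAt (fun s : ℝ => Real.cos (s/2)) (-Real.sin (r/2) * (1/2)) r := hhalf.cos
  have hL : HasDerivAt (fun s : ℝ => Real.log (Real.cos (s/2))) (-Real.tan (r/2) / 2) r := by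
    have h := hcosh.log hC.ne'
    convert h using 1
    rw [Real.tan_eq_sin_div_cos]
    field_simp
  have hTd : HasDerivAt (fun s : ℝ => Real.tan (s/2)) (1 / Real.cos (r/2)^2 * (1/2)) r :=
    by have := (Real.hasDerivAt_tan hC.ne').comp r hhalf; exact this
  have hN := (hTd.pow 2).neg
  have hxneg : -Real.tan (r/2)^2 < 0 := neg_lt_zero.mpr (pow_pos hT 2)
  have hD : HasDerivAt (fun s : ℝ => Li2 (-Real.tan (s/2)^2))
      (4 * Real.log (Real.cos (r/2)) / Real.sin r) r := by
    have hcomp := (li2_hasDerivAt hxneg).comp r hN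
    convert hcomp using 1
    case e'_4 => rfl
    case e'_5 => rfl
    case e'_8 => rfl
    have h1 : (1:ℝ) - -Real.tan (r/2)^2 = (Real.cos (r/2)^2)⁻¹ := by
      rw [← Real.inv_one_add_tan_sq hC.ne', inv_inv]; ring
    rw [h1, Real.log_inv, Real.log_pow, hsin2, Real.tan_eq_sin_div_cos]
    field_simp
    rw [show (2:ℕ) - 1 = 1 from rfl, pow_one, mul_div_assoc', eq_div_iff hC.ne']
    push_cast
    ring
  have hcosr : HasDerivAt Real.cos (-Real.sin r) r := Real.hasDerivAt_cos r
  have hts2 : Real.tan (r/2) * Real.sin r = 1 - Real.cos r := by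
    rw [hcos2, hsin2, Real.tan_eq_sin_div_cos]
    field_simp
    linear_combination 2 * hS2
  have htan2 : Real.tan (r/2) * Real.cos r = Real.sin r - Real.tan (r/2) := by
    rw [hcos2, hsin2, Real.tan_eq_sin_div_cos]
    field_simp
  have part1 := ((((((hL.pow 2).neg.mul hcosr).add (hL.mul hcosr)).sub
      (hcosr.const_mul (1/2:ℝ))).add hL).sub (hL.pow 2)).const_mul (2:ℝ)
  have part2 := (hD.mul ((hasDerivAt_const r (1:ℝ)).sub hcosr)).add ((hL.pow 2).const_mul (4:ℝ))
  have part3 := hcosr.const_mul K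
  have part4 := (((hL.neg.mul hcosr).add (hcosr.const_mul (1/2:ℝ))).sub hL).const_mul c
  have hFraw := ((part1.add part2).add part3).add part4
  unfold Faux
  convert hFraw using 1
  case e'_4 => rfl
  case e'_5 => rfl
  case e'_8 => rfl
  have hdivterm : 4 * Real.log (Real.cos (r/2)) / Real.sin r * (1 - Real.cos r)
      = 4 * (Real.log (Real.cos (r/2)) * Real.tan (r/2)) := by
    rw [← hts2]
    field_simp
  simp only [Pi.sub_apply, Pi.neg_apply, Pi.pow_apply]
  rw [hdivterm]
  linear_combination (1 - c/2 - 2 * Real.log (Real.cos (r/2))) * htan2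

lemma logcos_continuousOn {R : ℝ} (hR : R < π) :
    ContinuousOn (fun s : ℝ => Real.log (Real.cos (s/2))) (Set.Icc 0 R) := by
  intro s hs
  have hC : 0 < Real.cos (s/2) := Real.cos_pos_of_mem_Ioo
    ⟨by nlinarith [Real.pi_pos, hs.1], by nlinarith [hs.2]⟩
  apply ContinuousAt.continuousWithinAt
  have hcc : Continuous fun s : ℝ => Real.cos (s/2) := by fun_prop
  exact hcc.continuousAt.log hC.ne' 

lemma li2tan_continuousOn {R : ℝ} (hR : R < π) :
    ContinuousOn (fun s : ℝ => Li2 (-Real.tan (s/2)^2)) (Set.Icc 0 R) := by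
  intro s hs
  have hC : 0 < Real.cos (s/2) := Real.cos_pos_of_mem_Ioo
    ⟨by nlinarith [Real.pi_pos, hs.1], by nlinarith [hs.2]⟩
  have hhalfD : HasDerivAt (fun y : ℝ => y/2) (1/2) s := (hasDerivAt_id s).div_const 2
  have htanc : ContinuousAt (fun y : ℝ => Real.tan (y/2)) s :=
    by have := ((Real.hasDerivAt_tan hC.ne').comp s hhalfD).continuousAt; exact this
  have hinner : ContinuousWithinAt (fun s : ℝ => -Real.tan (s/2)^2) (Set.Icc 0 R) s :=
    ((htanc.pow 2).neg).continuousWithinAt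
  have hmem : -Real.tan (s/2)^2 ∈ Set.Iic (0:ℝ) := Set.mem_Iic.mpr (neg_nonpos.mpr (sq_nonneg _))
  have hmaps : Set.MapsTo (fun s : ℝ => -Real.tan (s/2)^2) (Set.Icc 0 R) (Set.Iic 0) :=
    fun y _ => Set.mem_Iic.mpr (neg_nonpos.mpr (sq_nonneg _))
  exact ContinuousWithinAt.comp (g := Li2) (t := Set.Iic 0) (li2_continuousOn _ hmem) hinner hmaps

lemma logdivcos_continuousOn {R : ℝ} (hR : R < π) (hCR : Real.cos (R/2) ≠ 0) :
    ContinuousOn (fun s : ℝ => Real.log (Real.cos (s/2) / Real.cos (R/2))) (Set.Icc 0 R) := by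
  intro s hs
  have hC : 0 < Real.cos (s/2) := Real.cos_pos_of_mem_Ioo
    ⟨by nlinarith [Real.pi_pos, hs.1], by nlinarith [hs.2]⟩
  apply ContinuousAt.continuousWithinAt
  have hcc : Continuous fun y : ℝ => Real.cos (y/2) / Real.cos (R/2) := by fun_prop
  exact hcc.continuousAt.log (div_ne_zero hC.ne' hCR)

/-- Maximal mean deflection on a spherical cap: the integral in geodesic polar
coordinates of the clamped-plate deflection `u` over the cap of radius `R < π`
on the unit 2-sphere equals `4π(sin²(R/2) − 4cot²(R/2)(log cos(R/2))²)`. -/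
theorem stmt_15 (R : ℝ) (hR0 : 0 < R) (hRπ : R < π)
    (c : ℝ) (hc : c = 4 * (Real.cos (R/2) / Real.sin (R/2))^2 * Real.log (Real.cos (R/2)))
    (u : ℝ → ℝ)
    (hu : ∀ r, u r = 2 * (Real.log (Real.cos (r/2)))^2 - 2 * (Real.log (Real.cos (R/2)))^2
        + Li2 (-(Real.tan (r/2))^2) - Li2 (-(Real.tan (R/2))^2)
        + c * Real.log (Real.cos (r/2) / Real.cos (R/2))) :
    2 * π * ∫ r in (0:ℝ)..R, u r * Real.sin r
      = 4 * π * ((Real.sin (R/2))^2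
          - 4 * (Real.cos (R/2) / Real.sin (R/2))^2 * (Real.log (Real.cos (R/2)))^2) := by
  have hCR : 0 < Real.cos (R/2) := Real.cos_pos_of_mem_Ioo
    ⟨by nlinarith [Real.pi_pos], by nlinarith⟩
  have hSR : 0 < Real.sin (R/2) := Real.sin_pos_of_pos_of_lt_pi (by linarith)
    (by nlinarith [Real.pi_pos])
  set K : ℝ := 2 * (Real.log (Real.cos (R/2)))^2 + Li2 (-(Real.tan (R/2))^2)
      + c * Real.log (Real.cos (R/2)) with hK
  have hcontL := logcos_continuousOn hRπ
  have hcontD := li2tan_continuousOn hRπ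
  have hcontQ := logdivcos_continuousOn hRπ hCR.ne'
  have hicc : Set.uIcc (0:ℝ) R = Set.Icc 0 R := Set.uIcc_of_le hR0.le
  have hint_cont : ContinuousOn (fun r : ℝ =>
      (2 * (Real.log (Real.cos (r/2)))^2 - 2 * (Real.log (Real.cos (R/2)))^2
        + Li2 (-(Real.tan (r/2))^2) - Li2 (-(Real.tan (R/2))^2)
        + c * Real.log (Real.cos (r/2) / Real.cos (R/2))) * Real.sin r) (Set.Icc 0 R) := by
    exact (((((continuousOn_const.mul (hcontL.pow 2)).sub continuousOn_const).add hcontD).sub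
      continuousOn_const).add (continuousOn_const.mul hcontQ)).mul Real.continuous_sin.continuousOn
  have hcontF : ContinuousOn (Faux c K) (Set.Icc 0 R) := by
    unfold Faux
    have hcos : ContinuousOn Real.cos (Set.Icc (0:ℝ) R) := Real.continuous_cos.continuousOn
    exact (((continuousOn_const.mul ((((((hcontL.pow 2).neg.mul hcos).add (hcontL.mul hcos)).sub
        (continuousOn_const.mul hcos)).add hcontL).sub (hcontL.pow 2))).add
        ((hcontD.mul (continuousOn_const.sub hcos)).add (continuousOn_const.mul (hcontL.pow 2)))).add
        (continuousOn_const.mul hcos)).add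
        (continuousOn_const.mul ((((hcontL.neg.mul hcos).add (continuousOn_const.mul hcos)).sub hcontL)))
  have hderiv : ∀ x ∈ Set.Ioo (0:ℝ) R, HasDerivAt (Faux c K)
      ((2 * (Real.log (Real.cos (x/2)))^2 - 2 * (Real.log (Real.cos (R/2)))^2
        + Li2 (-(Real.tan (x/2))^2) - Li2 (-(Real.tan (R/2))^2)
        + c * Real.log (Real.cos (x/2) / Real.cos (R/2))) * Real.sin x) x := by
    intro x hx
    have h := Faux_hasDerivAt c K hx.1 (hx.2.trans hRπ)
    have hCx : 0 < Real.cos (x/2) := Real.cos_pos_of_mem_Ioo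
      ⟨by nlinarith [Real.pi_pos, hx.1], by nlinarith [hx.2.trans hRπ]⟩
    convert h using 2
    rw [Real.log_div hCx.ne' hCR.ne', hK]
    ring
  have hintble : IntervalIntegrable (fun r : ℝ =>
      (2 * (Real.log (Real.cos (r/2)))^2 - 2 * (Real.log (Real.cos (R/2)))^2
        + Li2 (-(Real.tan (r/2))^2) - Li2 (-(Real.tan (R/2))^2)
        + c * Real.log (Real.cos (r/2) / Real.cos (R/2))) * Real.sin r) volume 0 R := by
    apply ContinuousOn.intervalIntegrable
    rwa [hicc]
  have key : (∫ r in (0:ℝ)..R, u r * Real.sin r) = Faux c K R - Faux c K 0 := by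
    rw [intervalIntegral.integral_congr (g := fun r : ℝ =>
      (2 * (Real.log (Real.cos (r/2)))^2 - 2 * (Real.log (Real.cos (R/2)))^2
        + Li2 (-(Real.tan (r/2))^2) - Li2 (-(Real.tan (R/2))^2)
        + c * Real.log (Real.cos (r/2) / Real.cos (R/2))) * Real.sin r)
      (fun x _ => by rw [hu x])]
    exact intervalIntegral.integral_eq_sub_of_hasDerivAt_of_le hR0.le hcontF hderiv hintble
  rw [key]
  have hF0 : Faux c K 0 = -1 + K + c/2 := by
    simp [Faux, li2_zero]
    ring
  have hcosR : Real.cos R = 1 - 2 * Real.sin (R/2)^2 := by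
    have h := Real.cos_two_mul (R/2)
    rw [show 2*(R/2) = R by ring] at h
    rw [h, Real.cos_sq']
    ring
  rw [hF0]
  simp only [Faux]
  rw [hcosR, hK, hc, div_pow, Real.cos_sq']
  field_simp
  ring
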